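/- Let X_1, …, X_N be finite spaces, μ_1, …, μ_N probability measures on X_1, …, X_N respectively, and c : X_1 × ⋯ × X_N → ℝ a real-valued cost function. Then a transport plan γ ∈ Π(μ_1,…,μ_N) is optimal if and only if its support is c-cyclically monotone in the multimarginal sense. -/

import Mathlib

open MeasureTheory

/-- A set `Γ` is `c`-cyclically monotone in the multimarginal sense. -/
def MultiCCyclicallyMonotone {N : ℕ} {X : Fin (N + 1) → Type*}
    (c : (∀ j, X j) → ℝ) (Γ : Set (∀ j, X j)) : Prop :=
  ∀ (k : ℕ) (p : Fin k → ∀ j, X j), (∀ i, p i ∈ Γ) →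
    ∀ σ : Fin (N + 1) → Equiv.Perm (Fin k), σ 0 = 1 →
      ∑ i, c (p i) ≤ ∑ i, c (fun j => p (σ j i) j)

/-- The support of a measure on a finite space: the set of its atoms. -/
def measureSupport {Z : Type*} [MeasurableSpace Z] (γ : Measure Z) : Set Z :=
  {z | γ {z} ≠ 0}

open Matrix

lemma rat_kernel_dense {ι κ : Type*} [Fintype ι] [Fintype κ] [DecidableEq ι] [DecidableEq κ]
    (A : Matrix κ ι ℚ) (x : ι → ℝ) (hx : (A.map (fun q : ℚ => (q : ℝ))).mulVec x = 0)
    (ε : ℝ) (hε : 0 < ε) :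
    ∃ q : ι → ℚ, A.mulVec q = 0 ∧ ∀ i, |x i - (q i : ℝ)| < ε := by
  classical
  set f : (ι → ℚ) →ₗ[ℚ] (κ → ℚ) := Matrix.toLin' A with hf
  obtain ⟨C, hC⟩ := Submodule.exists_isCompl (LinearMap.ker f)
  set π := (LinearMap.ker f).projectionOnto C hC with hπ
  set P : (ι → ℚ) →ₗ[ℚ] (ι → ℚ) := (LinearMap.ker f).subtype ∘ₗ π with hP
  have hPmem : ∀ y, P y ∈ LinearMap.ker f := fun y => (π y).2
  have hPfix : ∀ y ∈ LinearMap.ker f, P y = y := by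
    intro y hy
    have : π y = ⟨y, hy⟩ := by
      have := Submodule.projectionOnto_apply_left hC ⟨y, hy⟩
      simpa [hπ] using this
    simp [hP, this]
  have hle : LinearMap.ker f ≤ LinearMap.ker (LinearMap.id - P) := by
    intro y hy
    simp [LinearMap.mem_ker, hPfix y hy]
  set g0 : ((ι → ℚ) ⧸ LinearMap.ker f) →ₗ[ℚ] (ι → ℚ) :=
    (LinearMap.ker f).liftQ (LinearMap.id - P) hle with hg0
  set B0 : ↥(LinearMap.range f) →ₗ[ℚ] (ι → ℚ) :=
    g0 ∘ₗ (f.quotKerEquivRange.symm : ↥(LinearMap.range f) →ₗ[ℚ] _) with hB0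
  obtain ⟨B, hB⟩ := LinearMap.exists_extend B0
  have key : ∀ y, y - P y = B (f y) := by
    intro y
    have hmem : f y ∈ LinearMap.range f := ⟨y, rfl⟩
    have h1 : f.quotKerEquivRange (Submodule.Quotient.mk y) = ⟨f y, hmem⟩ := by
      apply Subtype.ext
      exact f.quotKerEquivRange_apply_mk y
    have h2 : B (f y) = B0 ⟨f y, hmem⟩ := by
      have := congrArg (fun (g : ↥(LinearMap.range f) →ₗ[ℚ] (ι → ℚ)) => g ⟨f y, hmem⟩) hB
      simpa using this
    rw [h2, hB0]
    simp only [LinearMap.coe_comp, Function.comp_apply, LinearEquiv.coe_coe]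
    rw [← h1, LinearEquiv.symm_apply_apply, hg0]
    simp [Submodule.liftQ_apply]
  -- matrix identities over ℚ
  set Pm := LinearMap.toMatrix' P with hPm
  set Bm := LinearMap.toMatrix' B with hBm
  have hmat : Pm + Bm * A = 1 := by
    have hlin : P + B ∘ₗ f = LinearMap.id := by
      apply LinearMap.ext
      intro y
      simp only [LinearMap.add_apply, LinearMap.coe_comp, Function.comp_apply, LinearMap.id_apply]
      rw [← key y]
      abel
    have := congrArg LinearMap.toMatrix' hlin
    rwa [map_add, LinearMap.toMatrix'_comp, LinearMap.toMatrix'_id, hf,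
      LinearMap.toMatrix'_toLin'] at this
  have hAP : A * Pm = 0 := by
    have hlin : f ∘ₗ P = 0 := by
      apply LinearMap.ext
      intro y
      exact hPmem y
    have := congrArg LinearMap.toMatrix' hlin
    rwa [LinearMap.toMatrix'_comp, map_zero, hf, LinearMap.toMatrix'_toLin'] at this
  -- cast to ℝ
  set cR : ℚ → ℝ := fun q => (q : ℝ) with hcR
  set A' := A.map cR with hA'
  set Pm' := Pm.map cR with hPm'
  set Bm' := Bm.map cR with hBm'
  have hmat' : Pm' + Bm' * A' = 1 := by
    ext i j
    have h := congrArg (fun M : Matrix ι ι ℚ => M i j) hmat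
    simp only [Matrix.add_apply, Matrix.mul_apply, Matrix.one_apply] at h
    simp only [hPm', hBm', hA', hcR, Matrix.add_apply, Matrix.mul_apply, Matrix.map_apply,
      Matrix.one_apply]
    rw [show (if i = j then (1:ℝ) else 0) = (((if i = j then (1:ℚ) else 0) : ℚ) : ℝ) by
      split <;> norm_num, ← h]
    push_cast
    ring
  have hAP' : A' * Pm' = 0 := by
    ext i j
    have h := congrArg (fun M : Matrix κ ι ℚ => M i j) hAP
    simp only [Matrix.mul_apply, Matrix.zero_apply] at h
    simp only [hA', hPm', hcR, Matrix.mul_apply, Matrix.map_apply, Matrix.zero_apply]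
    rw [show (0:ℝ) = ((0:ℚ) : ℝ) by norm_num, ← h]
    push_cast
    ring
  have hfix : Pm'.mulVec x = x := by
    have h1 : (Pm' + Bm' * A').mulVec x = x := by rw [hmat', Matrix.one_mulVec]
    rwa [Matrix.add_mulVec, ← Matrix.mulVec_mulVec, hx, Matrix.mulVec_zero, add_zero] at h1
  -- approximation
  set S : ℝ := (∑ i, ∑ l, |Pm' i l|) + 1 with hS
  have hSpos : 0 < S := by
    have : (0:ℝ) ≤ ∑ i, ∑ l, |Pm' i l| :=
      Finset.sum_nonneg fun i _ => Finset.sum_nonneg fun l _ => abs_nonneg _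
    linarith
  set δ : ℝ := ε / S with hδ
  have hδpos : 0 < δ := div_pos hε hSpos
  have hqr : ∀ l : ι, ∃ q : ℚ, x l - δ < (q:ℝ) ∧ (q:ℝ) < x l + δ := by
    intro l
    exact exists_rat_btwn (by linarith)
  choose qr hqr1 hqr2 using hqr
  refine ⟨Pm.mulVec qr, ?_, ?_⟩
  · rw [Matrix.mulVec_mulVec, hAP, Matrix.zero_mulVec]
  · intro i
    have hcastvec : ((Pm.mulVec qr i : ℚ) : ℝ) = Pm'.mulVec (fun l => (qr l : ℝ)) i := by
      simp only [Matrix.mulVec, dotProduct, hPm', Matrix.map_apply, hcR]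
      push_cast
      ring
    rw [hcastvec]
    have hxi : x i = Pm'.mulVec x i := by rw [hfix]
    rw [hxi]
    have hdiff : Pm'.mulVec x i - Pm'.mulVec (fun l => (qr l : ℝ)) i
        = ∑ l, Pm' i l * (x l - qr l) := by
      simp only [Matrix.mulVec, dotProduct]
      rw [← Finset.sum_sub_distrib]
      congr 1; funext l; ring
    rw [hdiff]
    have hbound : |∑ l, Pm' i l * (x l - qr l)| ≤ ∑ l, |Pm' i l| * δ := by
      refine (Finset.abs_sum_le_sum_abs _ _).trans ?_
      refine Finset.sum_le_sum fun l _ => ?_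
      rw [abs_mul]
      refine mul_le_mul_of_nonneg_left ?_ (abs_nonneg _)
      have h1 := hqr1 l
      have h2 := hqr2 l
      rw [abs_le]
      constructor <;> linarith
    have hrow : ∑ l, |Pm' i l| ≤ S - 1 := by
      rw [hS]
      have : ∑ l, |Pm' i l| ≤ ∑ i', ∑ l, |Pm' i' l| :=
        Finset.single_le_sum (f := fun i' => ∑ l, |Pm' i' l|)
          (fun i' _ => Finset.sum_nonneg fun l _ => abs_nonneg _) (Finset.mem_univ i)
      linarith
    have : ∑ l, |Pm' i l| * δ ≤ (S - 1) * δ := by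
      rw [← Finset.sum_mul]
      exact mul_le_mul_of_nonneg_right hrow hδpos.le
    have hfin : (S - 1) * δ < S * δ :=
      mul_lt_mul_of_pos_right (by linarith) hδpos
    have hSδ : S * δ = ε := by
      rw [hδ, mul_comm, div_mul_cancel₀ _ hSpos.ne']
    calc |∑ l, Pm' i l * (x l - ↑(qr l))| ≤ ∑ l, |Pm' i l| * δ := hbound
      _ ≤ (S - 1) * δ := this
      _ < S * δ := hfin
      _ = ε := hSδ


/-- A set `Γ` is `c`-cyclically monotone in the multimarginal sense. -/
lemma exists_perm_comp {α β : Type*} [Fintype α] [DecidableEq β] (f g : α → β)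
    (h : ∀ y, Fintype.card {i // f i = y} = Fintype.card {i // g i = y}) :
    ∃ σ : Equiv.Perm α, ∀ i, f i = g (σ i) := by
  classical
  let e : ∀ y, {i // f i = y} ≃ {i // g i = y} := fun y => Fintype.equivOfCardEq (h y)
  let σ : α ≃ α := (Equiv.sigmaFiberEquiv f).symm.trans
    ((Equiv.sigmaCongrRight e).trans (Equiv.sigmaFiberEquiv g))
  refine ⟨σ, fun i => ?_⟩
  have hσ : σ i = ((e (f i)) ⟨i, rfl⟩ : {j // g j = f i}).1 := by
    simp [σ, Equiv.sigmaFiberEquiv]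
  rw [hσ]
  exact ((e (f i)) ⟨i, rfl⟩).2.symm

lemma nat_case {N : ℕ} {X : Fin (N + 1) → Type*} [∀ j, Fintype (X j)] [∀ j, DecidableEq (X j)]
    (c : (∀ j, X j) → ℝ) (Γ : Set (∀ j, X j)) (hΓ : MultiCCyclicallyMonotone c Γ)
    (a b : (∀ j, X j) → ℕ)
    (hsupp : ∀ x, a x ≠ 0 → x ∈ Γ)
    (hm : ∀ (j : Fin (N + 1)) (y : X j),
      ∑ x ∈ Finset.univ.filter (fun x : ∀ j, X j => x j = y), a x
        = ∑ x ∈ Finset.univ.filter (fun x : ∀ j, X j => x j = y), b x) :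
    ∑ x, (a x : ℝ) * c x ≤ ∑ x, (b x : ℝ) * c x := by
  classical
  set n := ∑ x, a x with hn
  have htotal : ∑ x, b x = n := by
    rw [hn, ← Finset.sum_fiberwise Finset.univ (fun x : ∀ j, X j => x 0) a,
      ← Finset.sum_fiberwise Finset.univ (fun x : ∀ j, X j => x 0) b]
    exact (Finset.sum_congr rfl fun y _ => (hm 0 y).symm)
  have hcardA : Fintype.card (Σ x : ∀ j, X j, Fin (a x)) = n := by
    simp [Fintype.card_sigma, hn]
  have hcardB : Fintype.card (Σ x : ∀ j, X j, Fin (b x)) = n := by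
    simp [Fintype.card_sigma, htotal]
  let eA : (Σ x : ∀ j, X j, Fin (a x)) ≃ Fin n := Fintype.equivFinOfCardEq hcardA
  let eB : (Σ x : ∀ j, X j, Fin (b x)) ≃ Fin n := Fintype.equivFinOfCardEq hcardB
  set P : Fin n → ∀ j, X j := fun i => (eA.symm i).1 with hP
  set Q : Fin n → ∀ j, X j := fun i => (eB.symm i).1 with hQ
  have hPe : ∀ s, P (eA s) = s.1 := fun s => by simp [hP]
  have hQe : ∀ s, Q (eB s) = s.1 := fun s => by simp [hQ]
  -- sums over enumerations
  have hsumP : ∑ i, c (P i) = ∑ x, (a x : ℝ) * c x := by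
    rw [← Equiv.sum_comp eA (fun i => c (P i))]
    simp only [hPe]
    rw [← Finset.univ_sigma_univ, Finset.sum_sigma]
    simp [Finset.sum_const, nsmul_eq_mul]
  have hsumQ : ∑ i, c (Q i) = ∑ x, (b x : ℝ) * c x := by
    rw [← Equiv.sum_comp eB (fun i => c (Q i))]
    simp only [hQe]
    rw [← Finset.univ_sigma_univ, Finset.sum_sigma]
    simp [Finset.sum_const, nsmul_eq_mul]
  -- fiber cardinalities
  have hfibP : ∀ (j : Fin (N + 1)) (y : X j),
      Fintype.card {i : Fin n // P i j = y}
        = ∑ x ∈ Finset.univ.filter (fun x : ∀ j, X j => x j = y), a x := by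
    intro j y
    rw [Fintype.card_subtype, Finset.card_filter]
    rw [← Equiv.sum_comp eA (fun i => if P i j = y then 1 else 0)]
    simp only [hPe]
    rw [← Finset.univ_sigma_univ, Finset.sum_sigma]
    rw [Finset.sum_filter]
    refine Finset.sum_congr rfl fun x _ => ?_
    split <;> simp
  have hfibQ : ∀ (j : Fin (N + 1)) (y : X j),
      Fintype.card {i : Fin n // Q i j = y}
        = ∑ x ∈ Finset.univ.filter (fun x : ∀ j, X j => x j = y), b x := by
    intro j y
    rw [Fintype.card_subtype, Finset.card_filter]
    rw [← Equiv.sum_comp eB (fun i => if Q i j = y then 1 else 0)]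
    simp only [hQe]
    rw [← Finset.univ_sigma_univ, Finset.sum_sigma]
    rw [Finset.sum_filter]
    refine Finset.sum_congr rfl fun x _ => ?_
    split <;> simp
  -- permutations aligning coordinates
  have hτ : ∀ j : Fin (N + 1), ∃ τ : Equiv.Perm (Fin n), ∀ i, Q i j = P (τ i) j := by
    intro j
    apply exists_perm_comp (fun i => Q i j) (fun i => P i j)
    intro y
    rw [hfibP j y, hfibQ j y, hm j y]
  choose τ hτQ using hτ
  set σ : Fin (N + 1) → Equiv.Perm (Fin n) := fun j => (τ j) * (τ 0)⁻¹ with hσ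
  have hσ0 : σ 0 = 1 := by simp [hσ]
  have hPmem : ∀ i, P i ∈ Γ := by
    intro i
    apply hsupp
    have h2 : Fin (a (P i)) := (eA.symm i).2
    exact fun h0 => Fin.elim0 (h0 ▸ h2)
  have hkey := hΓ n P hPmem σ hσ0
  have hswap : ∀ i, (fun j => P ((σ j) i) j) = Q ((τ 0)⁻¹ i) := by
    intro i
    funext j
    rw [hσ]
    simp only [Equiv.Perm.mul_apply]
    exact (hτQ j ((τ 0)⁻¹ i)).symm
  rw [← hsumP, ← hsumQ]
  refine hkey.trans (le_of_eq ?_)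
  have h1 : ∑ i, c (fun j => P ((σ j) i) j) = ∑ i, c (Q ((τ 0)⁻¹ i)) :=
    Finset.sum_congr rfl fun i _ => by rw [hswap i]
  rw [h1, Equiv.sum_comp (τ 0)⁻¹ (fun i => c (Q i))]

lemma exists_nat_of_den_dvd (q : ℚ) (hq : 0 ≤ q) (n : ℕ) (hd : q.den ∣ n) :
    ∃ m : ℕ, (m : ℚ) = n * q := by
  obtain ⟨k, hk⟩ := hd
  have hqd : (q.den : ℚ) * q = q.num := by
    have hne : (q.den : ℚ) ≠ 0 := by exact_mod_cast q.den_nz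
    rw [mul_comm]
    exact ((div_eq_iff hne).mp (Rat.num_div_den q)).symm
  refine ⟨k * q.num.toNat, ?_⟩
  have hnum : (q.num.toNat : ℤ) = q.num := Int.toNat_of_nonneg (Rat.num_nonneg.mpr hq)
  have : ((k * q.num.toNat : ℕ) : ℚ) = (k : ℚ) * (q.num : ℚ) := by
    push_cast
    rw [show ((q.num.toNat : ℚ)) = ((q.num.toNat : ℤ) : ℚ) by push_cast; ring, hnum]
  rw [this, hk]
  push_cast
  rw [mul_comm (q.den : ℚ) (k : ℚ), mul_assoc, hqd]

lemma rat_case {N : ℕ} {X : Fin (N + 1) → Type*} [∀ j, Fintype (X j)] [∀ j, DecidableEq (X j)]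
    (c : (∀ j, X j) → ℝ) (Γ : Set (∀ j, X j)) (hΓ : MultiCCyclicallyMonotone c Γ)
    (u v : (∀ j, X j) → ℚ) (hu : ∀ x, 0 ≤ u x) (hv : ∀ x, 0 ≤ v x)
    (hsupp : ∀ x, u x ≠ 0 → x ∈ Γ)
    (hm : ∀ (j : Fin (N + 1)) (y : X j),
      ∑ x ∈ Finset.univ.filter (fun x : ∀ j, X j => x j = y), u x
        = ∑ x ∈ Finset.univ.filter (fun x : ∀ j, X j => x j = y), v x) :
    ∑ x, (u x : ℝ) * c x ≤ ∑ x, (v x : ℝ) * c x := by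
  classical
  set n : ℕ := ∏ x, ((u x).den * (v x).den) with hn
  have hdu : ∀ x, (u x).den ∣ n := by
    intro x
    exact dvd_trans (dvd_mul_right _ _) (Finset.dvd_prod_of_mem _ (Finset.mem_univ x))
  have hdv : ∀ x, (v x).den ∣ n := by
    intro x
    exact dvd_trans (dvd_mul_left _ _) (Finset.dvd_prod_of_mem _ (Finset.mem_univ x))
  have hnpos : 0 < n := by
    rw [hn]
    apply Finset.prod_pos
    intro x _
    exact Nat.mul_pos (u x).pos (v x).pos
  choose av hav using fun x => exists_nat_of_den_dvd (u x) (hu x) n (hdu x)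
  choose bv hbv using fun x => exists_nat_of_den_dvd (v x) (hv x) n (hdv x)
  have key := nat_case c Γ hΓ av bv ?_ ?_
  · have hcast : ∀ x, ((av x : ℝ)) = (n : ℝ) * (u x : ℝ) := by
      intro x
      have := congrArg (fun q : ℚ => (q : ℝ)) (hav x)
      push_cast at this ⊢
      exact this
    have hcast' : ∀ x, ((bv x : ℝ)) = (n : ℝ) * (v x : ℝ) := by
      intro x
      have := congrArg (fun q : ℚ => (q : ℝ)) (hbv x)
      push_cast at this ⊢
      exact this
    simp only [hcast, hcast', mul_assoc] at key
    rw [← Finset.mul_sum, ← Finset.mul_sum] at key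
    have hnR : (0 : ℝ) < n := by exact_mod_cast hnpos
    exact le_of_mul_le_mul_left key hnR
  · intro x hx
    apply hsupp
    intro h0
    apply hx
    have := hav x
    rw [h0, mul_zero] at this
    exact_mod_cast this
  · intro j y
    have : ((∑ x ∈ Finset.univ.filter (fun x : ∀ j, X j => x j = y), av x : ℕ) : ℚ)
        = ((∑ x ∈ Finset.univ.filter (fun x : ∀ j, X j => x j = y), bv x : ℕ) : ℚ) := by
      push_cast
      rw [Finset.sum_congr rfl (fun x _ => hav x), Finset.sum_congr rfl (fun x _ => hbv x),
        ← Finset.mul_sum, ← Finset.mul_sum, hm j y]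
    exact_mod_cast this

lemma real_case {N : ℕ} {X : Fin (N + 1) → Type*} [∀ j, Fintype (X j)] [∀ j, DecidableEq (X j)]
    (c : (∀ j, X j) → ℝ) (Γ : Set (∀ j, X j)) (hΓ : MultiCCyclicallyMonotone c Γ)
    (a b : (∀ j, X j) → ℝ) (ha : ∀ x, 0 ≤ a x) (hb : ∀ x, 0 ≤ b x)
    (hsupp : ∀ x, a x ≠ 0 → x ∈ Γ)
    (hm : ∀ (j : Fin (N + 1)) (y : X j),
      ∑ x ∈ Finset.univ.filter (fun x : ∀ j, X j => x j = y), a x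
        = ∑ x ∈ Finset.univ.filter (fun x : ∀ j, X j => x j = y), b x) :
    ∑ x, a x * c x ≤ ∑ x, b x * c x := by
  classical
  cases isEmpty_or_nonempty (∀ j, X j) with
  | inl h => simp [Finset.univ_eq_empty]
  | inr hne =>
  -- the rational constraint matrix
  set κ := ((Σ j : Fin (N + 1), X j) ⊕ ((∀ j, X j) ⊕ (∀ j, X j))) with hκ
  set A : Matrix κ ((∀ j, X j) ⊕ (∀ j, X j)) ℚ := fun r i =>
    match r, i with
    | Sum.inl ⟨j, y⟩, Sum.inl x => if x j = y then 1 else 0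
    | Sum.inl ⟨j, y⟩, Sum.inr x => if x j = y then -1 else 0
    | Sum.inr (Sum.inl x0), Sum.inl x => if x = x0 ∧ a x0 = 0 then 1 else 0
    | Sum.inr (Sum.inl _), Sum.inr _ => 0
    | Sum.inr (Sum.inr _), Sum.inl _ => 0
    | Sum.inr (Sum.inr x0), Sum.inr x => if x = x0 ∧ b x0 = 0 then 1 else 0
    with hA
  set z : ((∀ j, X j) ⊕ (∀ j, X j)) → ℝ := Sum.elim a b with hz
  have hker : (A.map (fun q : ℚ => (q : ℝ))).mulVec z = 0 := by
    funext r
    simp only [Matrix.mulVec, dotProduct, Matrix.map_apply, Pi.zero_apply]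
    rw [Fintype.sum_sum_type]
    match r with
    | Sum.inl ⟨j, y⟩ =>
      have h1 : ∑ x : (∀ j, X j), ((A (Sum.inl ⟨j, y⟩) (Sum.inl x) : ℚ) : ℝ) * z (Sum.inl x)
          = ∑ x ∈ Finset.univ.filter (fun x : (∀ j, X j) => x j = y), a x := by
        rw [Finset.sum_filter]
        refine Finset.sum_congr rfl fun x _ => ?_
        simp only [hA, hz, Sum.elim_inl]
        split <;> simp
      have h2 : ∑ x : (∀ j, X j), ((A (Sum.inl ⟨j, y⟩) (Sum.inr x) : ℚ) : ℝ) * z (Sum.inr x)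
          = -∑ x ∈ Finset.univ.filter (fun x : (∀ j, X j) => x j = y), b x := by
        rw [Finset.sum_filter, ← Finset.sum_neg_distrib]
        refine Finset.sum_congr rfl fun x _ => ?_
        simp only [hA, hz, Sum.elim_inr]
        split <;> simp
      rw [h1, h2, hm j y]
      ring
    | Sum.inr (Sum.inl x0) =>
      have h2 : ∑ x : (∀ j, X j), ((A (Sum.inr (Sum.inl x0)) (Sum.inr x) : ℚ) : ℝ) * z (Sum.inr x) = 0 := by
        refine Finset.sum_eq_zero fun x _ => ?_
        simp [hA]
      rw [h2, add_zero]
      by_cases h0 : a x0 = 0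
      · have : ∀ x : (∀ j, X j), ((A (Sum.inr (Sum.inl x0)) (Sum.inl x) : ℚ) : ℝ) * z (Sum.inl x)
            = if x = x0 then a x else 0 := by
          intro x
          simp only [hA, hz, Sum.elim_inl, h0, and_true]
          split <;> simp
        rw [Finset.sum_congr rfl fun x _ => this x, Finset.sum_ite_eq' Finset.univ x0 a]
        simp [h0]
      · refine Finset.sum_eq_zero fun x _ => ?_
        simp only [hA, hz, Sum.elim_inl]
        rw [if_neg (by tauto)]
        simp
    | Sum.inr (Sum.inr x0) =>
      have h1 : ∑ x : (∀ j, X j), ((A (Sum.inr (Sum.inr x0)) (Sum.inl x) : ℚ) : ℝ) * z (Sum.inl x) = 0 := by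
        refine Finset.sum_eq_zero fun x _ => ?_
        simp [hA]
      rw [h1, zero_add]
      by_cases h0 : b x0 = 0
      · have : ∀ x : (∀ j, X j), ((A (Sum.inr (Sum.inr x0)) (Sum.inr x) : ℚ) : ℝ) * z (Sum.inr x)
            = if x = x0 then b x else 0 := by
          intro x
          simp only [hA, hz, Sum.elim_inr, h0, and_true]
          split <;> simp
        rw [Finset.sum_congr rfl fun x _ => this x, Finset.sum_ite_eq' Finset.univ x0 b]
        simp [h0]
      · refine Finset.sum_eq_zero fun x _ => ?_
        simp only [hA, hz, Sum.elim_inr]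
        rw [if_neg (by tauto)]
        simp
  -- it suffices to prove the inequality up to ε
  refine le_of_forall_pos_le_add ?_
  intro ε hε
  -- choose the approximation accuracy
  set T : ℝ := (∑ x, |c x|) + 1 with hT
  have hTpos : 0 < T := by
    have : (0:ℝ) ≤ ∑ x, |c x| := Finset.sum_nonneg fun x _ => abs_nonneg _
    linarith
  set δ₁ : ℝ := min (Finset.univ.inf' (Finset.univ_nonempty) fun x : (∀ j, X j) => if a x = 0 then 1 else a x)
      (Finset.univ.inf' (Finset.univ_nonempty) fun x : (∀ j, X j) => if b x = 0 then 1 else b x) with hδ₁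
  have hδ₁pos : 0 < δ₁ := by
    rw [hδ₁]
    apply lt_min
    · rw [Finset.lt_inf'_iff]
      intro x _
      split
      · norm_num
      · rename_i h
        exact lt_of_le_of_ne (ha x) (Ne.symm h)
    · rw [Finset.lt_inf'_iff]
      intro x _
      split
      · norm_num
      · rename_i h
        exact lt_of_le_of_ne (hb x) (Ne.symm h)
  set δ : ℝ := min δ₁ (ε / (2 * Fintype.card (∀ j, X j) * T + 1)) with hδ
  have hcardpos : (0:ℝ) < 2 * Fintype.card (∀ j, X j) * T + 1 := by
    have : (0:ℝ) ≤ 2 * Fintype.card (∀ j, X j) * T := by positivity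
    linarith
  have hδpos : 0 < δ := lt_min hδ₁pos (div_pos hε hcardpos)
  obtain ⟨q, hqker, hqclose⟩ := rat_kernel_dense A z hker δ hδpos
  set u : (∀ j, X j) → ℚ := fun x => q (Sum.inl x) with hu
  set v : (∀ j, X j) → ℚ := fun x => q (Sum.inr x) with hv
  -- evaluating kernel rows of q
  have hrow : ∀ r : κ, ∑ x : (∀ j, X j), A r (Sum.inl x) * u x + ∑ x : (∀ j, X j), A r (Sum.inr x) * v x = 0 := by
    intro r
    have := congrFun hqker r
    simp only [Matrix.mulVec, dotProduct, Pi.zero_apply] at this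
    rw [Fintype.sum_sum_type] at this
    exact this
  -- u vanishes where a vanishes, v where b vanishes
  have hu0 : ∀ x, a x = 0 → u x = 0 := by
    intro x0 h0
    have := hrow (Sum.inr (Sum.inl x0))
    have h2 : ∑ x : (∀ j, X j), A (Sum.inr (Sum.inl x0)) (Sum.inr x) * v x = 0 :=
      Finset.sum_eq_zero fun x _ => by simp [hA]
    rw [h2, add_zero] at this
    have h1 : ∀ x : (∀ j, X j), A (Sum.inr (Sum.inl x0)) (Sum.inl x) * u x
        = if x = x0 then u x else 0 := by
      intro x
      simp only [hA, h0, and_true]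
      split <;> simp
    rw [Finset.sum_congr rfl fun x _ => h1 x, Finset.sum_ite_eq' Finset.univ x0 u] at this
    simpa using this
  have hv0 : ∀ x, b x = 0 → v x = 0 := by
    intro x0 h0
    have := hrow (Sum.inr (Sum.inr x0))
    have h1 : ∑ x : (∀ j, X j), A (Sum.inr (Sum.inr x0)) (Sum.inl x) * u x = 0 :=
      Finset.sum_eq_zero fun x _ => by simp [hA]
    rw [h1, zero_add] at this
    have h2 : ∀ x : (∀ j, X j), A (Sum.inr (Sum.inr x0)) (Sum.inr x) * v x
        = if x = x0 then v x else 0 := by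
      intro x
      simp only [hA, h0, and_true]
      split <;> simp
    rw [Finset.sum_congr rfl fun x _ => h2 x, Finset.sum_ite_eq' Finset.univ x0 v] at this
    simpa using this
  -- closeness
  have hclu : ∀ x, |a x - (u x : ℝ)| < δ := fun x => by
    have := hqclose (Sum.inl x); simpa [hz, hu] using this
  have hclv : ∀ x, |b x - (v x : ℝ)| < δ := fun x => by
    have := hqclose (Sum.inr x); simpa [hz, hv] using this
  -- nonnegativity of u, v
  have hupos : ∀ x, 0 ≤ u x := by
    intro x
    by_cases h0 : a x = 0
    · rw [hu0 x h0]
    · have h1 := hclu x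
      have h2 : δ ≤ a x := by
        have := min_le_left δ₁ (ε / (2 * Fintype.card (∀ j, X j) * T + 1))
        have h3 : δ₁ ≤ if a x = 0 then 1 else a x := by
          refine le_trans (min_le_left _ _) (Finset.inf'_le _ (Finset.mem_univ x))
        rw [if_neg h0] at h3
        calc δ ≤ δ₁ := min_le_left _ _
          _ ≤ a x := h3
      have : (0:ℝ) < (u x : ℝ) := by
        have := abs_lt.mp h1
        linarith
      exact_mod_cast this.le
  have hvpos : ∀ x, 0 ≤ v x := by
    intro x
    by_cases h0 : b x = 0
    · rw [hv0 x h0]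
    · have h1 := hclv x
      have h3 : δ₁ ≤ if b x = 0 then 1 else b x :=
        le_trans (min_le_right _ _) (Finset.inf'_le _ (Finset.mem_univ x))
      rw [if_neg h0] at h3
      have h2 : δ ≤ b x := le_trans (min_le_left _ _) h3
      have : (0:ℝ) < (v x : ℝ) := by
        have := abs_lt.mp h1
        linarith
      exact_mod_cast this.le
  -- marginal equality for u, v over ℚ
  have hmq : ∀ (j : Fin (N + 1)) (y : X j),
      ∑ x ∈ Finset.univ.filter (fun x : (∀ j, X j) => x j = y), u x
        = ∑ x ∈ Finset.univ.filter (fun x : (∀ j, X j) => x j = y), v x := by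
    intro j y
    have := hrow (Sum.inl ⟨j, y⟩)
    have h1 : ∑ x : (∀ j, X j), A (Sum.inl ⟨j, y⟩) (Sum.inl x) * u x
        = ∑ x ∈ Finset.univ.filter (fun x : (∀ j, X j) => x j = y), u x := by
      rw [Finset.sum_filter]
      refine Finset.sum_congr rfl fun x _ => ?_
      simp only [hA]
      split <;> simp
    have h2 : ∑ x : (∀ j, X j), A (Sum.inl ⟨j, y⟩) (Sum.inr x) * v x
        = -∑ x ∈ Finset.univ.filter (fun x : (∀ j, X j) => x j = y), v x := by
      rw [Finset.sum_filter, ← Finset.sum_neg_distrib]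
      refine Finset.sum_congr rfl fun x _ => ?_
      simp only [hA]
      split <;> simp
    rw [h1, h2] at this
    linarith
  -- support condition for u
  have hsuppu : ∀ x, u x ≠ 0 → x ∈ Γ := by
    intro x hx
    refine hsupp x fun h0 => hx (hu0 x h0)
  -- apply the rational case
  have hQ := rat_case c Γ hΓ u v hupos hvpos hsuppu hmq
  -- conclude by approximation
  have hub : |∑ x, a x * c x - ∑ x, (u x : ℝ) * c x| ≤ Fintype.card (∀ j, X j) * δ * T := by
    rw [← Finset.sum_sub_distrib]
    refine (Finset.abs_sum_le_sum_abs _ _).trans ?_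
    have : ∀ x : (∀ j, X j), |a x * c x - (u x : ℝ) * c x| ≤ δ * T := by
      intro x
      rw [show a x * c x - (u x : ℝ) * c x = (a x - u x) * c x by ring, abs_mul]
      have h1 : |a x - (u x : ℝ)| ≤ δ := (hclu x).le
      have h2 : |c x| ≤ T := by
        rw [hT]
        have : |c x| ≤ ∑ x, |c x| :=
          Finset.single_le_sum (f := fun x => |c x|) (fun x _ => abs_nonneg _) (Finset.mem_univ x)
        linarith
      exact mul_le_mul h1 h2 (abs_nonneg _) hδpos.le
    refine (Finset.sum_le_sum fun x _ => this x).trans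
      (le_of_eq (by rw [Finset.sum_const, Finset.card_univ, nsmul_eq_mul]; ring))
  have hvb : |∑ x, (v x : ℝ) * c x - ∑ x, b x * c x| ≤ Fintype.card (∀ j, X j) * δ * T := by
    rw [← Finset.sum_sub_distrib]
    refine (Finset.abs_sum_le_sum_abs _ _).trans ?_
    have : ∀ x : (∀ j, X j), |(v x : ℝ) * c x - b x * c x| ≤ δ * T := by
      intro x
      rw [show (v x : ℝ) * c x - b x * c x = -((b x - v x) * c x) by ring, abs_neg, abs_mul]
      have h1 : |b x - (v x : ℝ)| ≤ δ := (hclv x).le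
      have h2 : |c x| ≤ T := by
        rw [hT]
        have : |c x| ≤ ∑ x, |c x| :=
          Finset.single_le_sum (f := fun x => |c x|) (fun x _ => abs_nonneg _) (Finset.mem_univ x)
        linarith
      exact mul_le_mul h1 h2 (abs_nonneg _) hδpos.le
    refine (Finset.sum_le_sum fun x _ => this x).trans
      (le_of_eq (by rw [Finset.sum_const, Finset.card_univ, nsmul_eq_mul]; ring))
  have hKε : 2 * (Fintype.card (∀ j, X j) * δ * T) ≤ ε := by
    have hδle : δ ≤ ε / (2 * Fintype.card (∀ j, X j) * T + 1) := min_le_right _ _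
    have h1 : δ * (2 * Fintype.card (∀ j, X j) * T + 1) ≤ ε := by
      rw [← le_div_iff₀ hcardpos]
      exact hδle
    have h2 : 2 * (Fintype.card (∀ j, X j) * δ * T) ≤ δ * (2 * Fintype.card (∀ j, X j) * T + 1) := by
      nlinarith [hδpos.le]
    linarith
  have e1 := abs_le.mp hub
  have e2 := abs_le.mp hvb
  linarith


section MeasHelpers
open MeasureTheory
set_option linter.unusedSectionVars false

variable {Z : Type*} [Fintype Z] [MeasurableSpace Z] [MeasurableSingletonClass Z]

noncomputable def ofW (w : Z → ENNReal) : Measure Z := ∑ x, w x • Measure.dirac x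

lemma ofW_apply (w : Z → ENNReal) (s : Set Z) :
    ofW w s = ∑ x, w x * s.indicator 1 x := by
  rw [ofW, Measure.finset_sum_apply]
  refine Finset.sum_congr rfl fun x _ => ?_
  rw [Measure.smul_apply, Measure.dirac_apply, smul_eq_mul]

lemma ofW_singleton (w : Z → ENNReal) (z : Z) : ofW w {z} = w z := by
  classical
  rw [ofW_apply]
  have : ∀ x : Z, w x * ({z} : Set Z).indicator 1 x = if x = z then w x else 0 := by
    intro x
    simp [Set.indicator_apply]
  rw [Finset.sum_congr rfl fun x _ => this x, Finset.sum_ite_eq' Finset.univ z w]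
  simp

lemma eq_ofW (ν : Measure Z) : ν = ofW (fun x => ν {x}) := by
  conv_lhs => rw [← Measure.sum_smul_dirac ν]
  rw [Measure.sum_fintype, ofW]

lemma ofW_add (w₁ w₂ : Z → ENNReal) :
    ofW (fun x => w₁ x + w₂ x) = ofW w₁ + ofW w₂ := by
  rw [ofW, ofW, ofW, ← Finset.sum_add_distrib]
  refine Finset.sum_congr rfl fun x _ => ?_
  rw [add_smul]

lemma map_ofW {W : Type*} [MeasurableSpace W] [MeasurableSingletonClass W]
    (w : Z → ENNReal) {f : Z → W} (hf : Measurable f) :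
    (ofW w).map f = ∑ x, w x • Measure.dirac (f x) := by
  ext s hs
  rw [Measure.map_apply hf hs, ofW_apply, Measure.finset_sum_apply]
  refine Finset.sum_congr rfl fun x _ => ?_
  rw [Measure.smul_apply, Measure.dirac_apply, smul_eq_mul]
  by_cases h : f x ∈ s <;> simp [Set.indicator_apply, Set.mem_preimage, h]

lemma meas_preimage_singleton {W : Type*} [MeasurableSpace W] [MeasurableSingletonClass W]
    [DecidableEq W] (ν : Measure Z) {f : Z → W} (hf : Measurable f) (y : W) :
    ν.map f {y} = ∑ x ∈ Finset.univ.filter (fun x => f x = y), ν {x} := by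
  rw [Measure.map_apply hf (MeasurableSet.singleton y)]
  conv_lhs => rw [eq_ofW ν]
  rw [ofW_apply, Finset.sum_filter]
  refine Finset.sum_congr rfl fun x _ => ?_
  by_cases h : f x = y
  · simp [Set.indicator_apply, Set.mem_preimage, h]
  · simp [Set.indicator_apply, Set.mem_preimage, h]

lemma sum_card_mul {k : ℕ} [DecidableEq Z] (p : Fin k → Z) (c : Z → ℝ) :
    ∑ x, ((Finset.univ.filter (fun i => p i = x)).card : ℝ) * c x = ∑ i, c (p i) := by
  rw [← Finset.sum_fiberwise Finset.univ p (fun i => c (p i))]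
  refine Finset.sum_congr rfl fun x _ => ?_
  rw [Finset.sum_congr rfl (fun i hi => by rw [(Finset.mem_filter.mp hi).2]),
    Finset.sum_const, nsmul_eq_mul]

lemma sum_card_smul {k : ℕ} [DecidableEq Z] {W : Type*} [MeasurableSpace W]
    (p : Fin k → Z) (g : Z → Measure W) (ε : ENNReal) :
    ∑ x, (ε * ((Finset.univ.filter (fun i => p i = x)).card : ENNReal)) • g x
      = ∑ i, ε • g (p i) := by
  rw [← Finset.sum_fiberwise Finset.univ p (fun i => ε • g (p i))]
  refine Finset.sum_congr rfl fun x _ => ?_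
  rw [Finset.sum_congr rfl (fun i hi => by rw [(Finset.mem_filter.mp hi).2]),
    Finset.sum_const]
  rw [mul_comm, mul_smul, Nat.cast_smul_eq_nsmul]

end MeasHelpers

open MeasureTheory

/-- In finite spaces, for a real-valued cost, a multimarginal transport plan is optimal
if and only if its support is `c`-cyclically monotone. -/
theorem optimal_iff_multiCCyclicallyMonotone_of_finite_spaces
    {N : ℕ} {X : Fin (N + 1) → Type*}
    [∀ i, Fintype (X i)]
    [∀ i, MeasurableSpace (X i)] [∀ i, MeasurableSingletonClass (X i)]
    (μ : ∀ i, Measure (X i)) [∀ i, IsProbabilityMeasure (μ i)]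
    (c : (∀ i, X i) → ℝ)
    (γ : Measure (∀ i, X i))
    (hγ : ∀ i, γ.map (fun x => x i) = μ i) :
    (∀ γ' : Measure (∀ i, X i), (∀ i, γ'.map (fun x => x i) = μ i) →
        ∫ x, c x ∂γ ≤ ∫ x, c x ∂γ') ↔
      MultiCCyclicallyMonotone c (measureSupport γ) := by
  classical
  letI : ∀ j, DecidableEq (X j) := fun j => Classical.decEq _
  have hproj : ∀ j : Fin (N + 1), Measurable fun x : ∀ i, X i => x j :=
    fun j => measurable_pi_apply j
  have hγuniv : γ Set.univ = 1 := by
    have h0 : (γ.map fun x => x 0) Set.univ = 1 := by rw [hγ 0]; exact measure_univ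
    rwa [Measure.map_apply (hproj 0) MeasurableSet.univ, Set.preimage_univ] at h0
  haveI : IsProbabilityMeasure γ := ⟨hγuniv⟩
  constructor
  · -- optimal → cyclically monotone
    intro hopt k p hp σ hσ0
    rcases Nat.eq_zero_or_pos k with hk0 | hkpos
    · subst hk0; simp
    haveI hne : Nonempty (Fin k) := ⟨⟨0, hkpos⟩⟩
    set q : Fin k → ∀ j, X j := fun i => fun j => p (σ j i) j with hq
    set Np : (∀ j, X j) → ENNReal :=
      fun x => ((Finset.univ.filter (fun i => p i = x)).card : ENNReal) with hNp
    set Nq : (∀ j, X j) → ENNReal :=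
      fun x => ((Finset.univ.filter (fun i => q i = x)).card : ENNReal) with hNq
    set m : ENNReal := Finset.univ.inf' Finset.univ_nonempty (fun i : Fin k => γ {p i}) with hm
    have hmpos : 0 < m := by
      rw [hm, Finset.lt_inf'_iff]
      intro i _
      exact pos_iff_ne_zero.mpr (hp i)
    have hmtop : m ≠ ⊤ := by
      obtain ⟨i⟩ := hne
      exact ne_top_of_le_ne_top (measure_ne_top γ _) (Finset.inf'_le _ (Finset.mem_univ i))
    set ε : ENNReal := m / k with hε
    have hk0' : (k : ENNReal) ≠ 0 := by exact_mod_cast Nat.pos_iff_ne_zero.mp hkpos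
    have hktop : (k : ENNReal) ≠ ⊤ := ENNReal.natCast_ne_top k
    have hεpos : ε ≠ 0 := by
      rw [hε]
      exact (ENNReal.div_pos hmpos.ne' hktop).ne'
    have hεtop : ε ≠ ⊤ := by
      rw [hε]
      exact (ENNReal.div_lt_top hmtop hk0').ne
    have hεk : ε * k = m := by rw [hε, ENNReal.div_mul_cancel hk0' hktop]
    have hbound : ∀ x, ε * Np x ≤ γ {x} := by
      intro x
      rcases Finset.eq_empty_or_nonempty (Finset.univ.filter (fun i => p i = x)) with he | ⟨i, hi⟩
      · simp only [hNp]; rw [he]; simp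
      · have hpx : p i = x := (Finset.mem_filter.mp hi).2
        have h1 : Np x ≤ (k : ENNReal) := by
          rw [hNp]
          exact_mod_cast Nat.cast_le.mpr ((Finset.card_filter_le _ _).trans (by simp))
        calc ε * Np x ≤ ε * k := mul_le_mul_right h1 ε
          _ = m := hεk
          _ ≤ γ {p i} := Finset.inf'_le _ (Finset.mem_univ i)
          _ = γ {x} := by rw [hpx]
    have hNptop : ∀ x, ε * Np x ≠ ⊤ :=
      fun x => ne_top_of_le_ne_top (measure_ne_top γ {x}) (hbound x)
    have hNqtop : ∀ x, ε * Nq x ≠ ⊤ :=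
      fun x => ENNReal.mul_ne_top hεtop (ENNReal.natCast_ne_top _)
    set w' : (∀ j, X j) → ENNReal := fun x => (γ {x} - ε * Np x) + ε * Nq x with hw'
    have hkey : ∀ x, w' x + ε * Np x = γ {x} + ε * Nq x := by
      intro x
      rw [hw']
      rw [add_right_comm, tsub_add_cancel_of_le (hbound x)]
    set γ' : Measure (∀ j, X j) := ofW w' with hγ'def
    have hmarg : ∀ j, γ'.map (fun x => x j) = μ j := by
      intro j
      have hadd : γ' + ofW (fun x => ε * Np x)
          = ofW (fun x => γ {x}) + ofW (fun x => ε * Nq x) := by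
        rw [hγ'def, ← ofW_add, ← ofW_add]
        congr 1
        funext x
        exact hkey x
      have hmapped := congrArg (fun ν : Measure (∀ j, X j) => ν.map (fun x => x j)) hadd
      rw [Measure.map_add _ _ (hproj j), Measure.map_add _ _ (hproj j)] at hmapped
      have hγofW : (ofW (fun x => γ {x})).map (fun x => x j) = μ j := by
        rw [← eq_ofW γ, hγ j]
      have hMp : (ofW (fun x => ε * Np x)).map (fun x => x j)
          = ∑ i, ε • Measure.dirac (p i j) := by
        rw [map_ofW _ (hproj j)]
        exact sum_card_smul p (fun x => Measure.dirac (x j)) ε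
      have hMq : (ofW (fun x => ε * Nq x)).map (fun x => x j)
          = ∑ i, ε • Measure.dirac (q i j) := by
        rw [map_ofW _ (hproj j)]
        exact sum_card_smul q (fun x => Measure.dirac (x j)) ε
      have hQP : ∑ i, ε • Measure.dirac (q i j) = ∑ i, ε • Measure.dirac (p i j) := by
        have h := Equiv.sum_comp (σ j) (fun i => ε • Measure.dirac (p i j))
        exact h
      rw [hγofW, hMp, hMq, hQP] at hmapped
      ext s hs
      have h := congrArg (fun ν : Measure (X j) => ν s) hmapped
      simp only [Measure.add_apply] at h
      have hMs : (∑ i, ε • Measure.dirac (p i j)) s ≠ ⊤ := by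
        rw [Measure.finset_sum_apply]
        refine (ENNReal.sum_lt_top.mpr fun i _ => ?_).ne
        rw [Measure.smul_apply, smul_eq_mul]
        exact ENNReal.mul_lt_top hεtop.lt_top (measure_ne_top _ _).lt_top
      exact WithTop.add_right_cancel hMs h
    -- compare integrals
    have hγ'univ : γ' Set.univ = 1 := by
      have h0 : (γ'.map fun x => x 0) Set.univ = 1 := by rw [hmarg 0]; exact measure_univ
      rwa [Measure.map_apply (hproj 0) MeasurableSet.univ, Set.preimage_univ] at h0
    haveI : IsProbabilityMeasure γ' := ⟨hγ'univ⟩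
    have hint := hopt γ' hmarg
    rw [integral_fintype Integrable.of_finite, integral_fintype Integrable.of_finite] at hint
    simp only [measureReal_def] at hint
    have hγ'single : ∀ x, γ' {x} = w' x := fun x => ofW_singleton w' x
    have hreal : ∀ x, (w' x).toReal
        = (γ {x}).toReal - ε.toReal * (Np x).toReal + ε.toReal * (Nq x).toReal := by
      intro x
      have hfin1 : w' x ≠ ⊤ := by
        have hle : w' x ≤ γ {x} + ε * Nq x := by
          rw [← hkey x]; exact le_add_of_nonneg_right zero_le
        exact ne_top_of_le_ne_top (ENNReal.add_ne_top.mpr ⟨measure_ne_top _ _, hNqtop x⟩) hle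
      have h := congrArg ENNReal.toReal (hkey x)
      rw [ENNReal.toReal_add hfin1 (hNptop x),
        ENNReal.toReal_add (measure_ne_top _ _) (hNqtop x), ENNReal.toReal_mul,
        ENNReal.toReal_mul] at h
      linarith
    have hNpsum : ∑ x, (Np x).toReal * c x = ∑ i, c (p i) := by
      have : ∀ x, (Np x).toReal
          = ((Finset.univ.filter (fun i => p i = x)).card : ℝ) := by
        intro x; rw [hNp]; simp
      rw [Finset.sum_congr rfl fun x _ => by rw [this x]]
      exact sum_card_mul p c
    have hNqsum : ∑ x, (Nq x).toReal * c x = ∑ i, c (q i) := by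
      have : ∀ x, (Nq x).toReal
          = ((Finset.univ.filter (fun i => q i = x)).card : ℝ) := by
        intro x; rw [hNq]; simp
      rw [Finset.sum_congr rfl fun x _ => by rw [this x]]
      exact sum_card_mul q c
    have hexp : ∑ x, (γ' {x}).toReal • c x
        = ∑ x, (γ {x}).toReal • c x
          - ε.toReal * (∑ i, c (p i)) + ε.toReal * (∑ i, c (q i)) := by
      rw [← hNpsum, ← hNqsum, Finset.mul_sum, Finset.mul_sum]
      rw [← Finset.sum_sub_distrib, ← Finset.sum_add_distrib]
      refine Finset.sum_congr rfl fun x _ => ?_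
      rw [hγ'single x, smul_eq_mul, smul_eq_mul, hreal x]
      ring
    rw [hexp] at hint
    have hε' : 0 < ε.toReal := ENNReal.toReal_pos hεpos hεtop
    have : ∑ i, c (p i) ≤ ∑ i, c (q i) := by nlinarith
    exact this
  · -- cyclically monotone → optimal
    intro hmono γ' hγ'
    have hγ'univ : γ' Set.univ = 1 := by
      have h0 : (γ'.map fun x => x 0) Set.univ = 1 := by rw [hγ' 0]; exact measure_univ
      rwa [Measure.map_apply (hproj 0) MeasurableSet.univ, Set.preimage_univ] at h0
    haveI : IsProbabilityMeasure γ' := ⟨hγ'univ⟩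
    set a : (∀ j, X j) → ℝ := fun x => (γ {x}).toReal with ha
    set b : (∀ j, X j) → ℝ := fun x => (γ' {x}).toReal with hb
    have hmarg : ∀ (j : Fin (N + 1)) (y : X j),
        ∑ x ∈ Finset.univ.filter (fun x : ∀ j, X j => x j = y), a x
          = ∑ x ∈ Finset.univ.filter (fun x : ∀ j, X j => x j = y), b x := by
      intro j y
      have h1 := meas_preimage_singleton γ (hproj j) y
      have h2 := meas_preimage_singleton γ' (hproj j) y
      rw [hγ j] at h1
      rw [hγ' j] at h2
      have h3 : (∑ x ∈ Finset.univ.filter (fun x : ∀ j, X j => x j = y), γ {x}).toReal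
          = (∑ x ∈ Finset.univ.filter (fun x : ∀ j, X j => x j = y), γ' {x}).toReal := by
        rw [← h1, ← h2]
      rw [ENNReal.toReal_sum (fun x _ => measure_ne_top _ _),
        ENNReal.toReal_sum (fun x _ => measure_ne_top _ _)] at h3
      exact h3
    have hsupp : ∀ x, a x ≠ 0 → x ∈ measureSupport γ := by
      intro x hx
      show γ {x} ≠ 0
      intro h0
      apply hx
      rw [ha]
      simp only [h0, ENNReal.toReal_zero]
    have hkey := real_case c (measureSupport γ) hmono a b
      (fun x => ENNReal.toReal_nonneg) (fun x => ENNReal.toReal_nonneg) hsupp hmarg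
    rw [integral_fintype Integrable.of_finite, integral_fintype Integrable.of_finite]
    simpa [smul_eq_mul, measureReal_def] using hkey
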